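/- Let θ ∈ ℝ and let f : ℝ → ℂ be measurable with ∫_{(0,1]} |f|² < ∞. Then for almost every x ∈ (0,1] the series C_θ[f](x) := Σ_{k=1}^∞ 2^{−k}·(cos θ + i·(−1)^{ε_k(x)}·sin θ)·f(x + (−1)^{ε_k(x)}·2^{−k}) converges absolutely, and ∫_{(0,1]} |C_θ[f](x)|² dx ≤ ∫_{(0,1]} |f(x)|² dx. That is, the operator C_θ = cos θ·C_x + sin θ·C_y on L²(0,1] has operator norm at most 1. -/

import Mathlib

open MeasureTheory Set
open scoped ENNReal NNReal

noncomputable section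

/-- The `k`-th binary digit of `x ∈ (0,1]`: `ε_k(x) = (⌈2^k x⌉ − 1) mod 2`. -/
def eps (k : ℕ) (x : ℝ) : ℤ := (⌈(2 : ℝ) ^ k * x⌉ - 1) % 2

def T (n : ℕ) (x : ℝ) : ℝ := x + (-1 : ℝ) ^ eps n x * (2 : ℝ) ^ (-(n : ℤ))

lemma eps_measurable (n : ℕ) : Measurable (eps n) := by
  exact (measurable_from_top (f := fun z : ℤ => (z - 1) % 2)).comp
    (Measurable.ceil (measurable_const_mul _) : Measurable fun x : ℝ => ⌈(2:ℝ)^n * x⌉)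

lemma T_measurable (n : ℕ) : Measurable (T n) := by
  have : Measurable fun x => (-1 : ℝ) ^ eps n x :=
    (measurable_from_top (f := fun z : ℤ => (-1 : ℝ) ^ z)).comp (eps_measurable n)
  exact measurable_id.add (this.mul_const _)

lemma eps_eq (n j : ℕ) {x : ℝ} (hx : x ∈ Ioc ((j : ℝ) * 2 ^ (-(n:ℤ))) ((j + 1 : ℝ) * 2 ^ (-(n:ℤ)))) :
    eps n x = (j : ℤ) % 2 := by
  have h2 : (2:ℝ)^(n:ℕ) * (2:ℝ)^(-(n:ℤ)) = 1 := by
    rw [← zpow_natCast (2:ℝ) n, ← zpow_add₀ (by norm_num : (2:ℝ) ≠ 0)]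
    simp
  have hceil : ⌈(2:ℝ)^n * x⌉ = (j : ℤ) + 1 := by
    rw [Int.ceil_eq_iff]
    constructor
    · push_cast
      calc ((j:ℝ) + 1 - 1) = (2:ℝ)^n * ((j:ℝ) * 2^(-(n:ℤ))) := by
            rw [mul_comm ((j:ℝ)) _, ← mul_assoc, h2]; ring
        _ < 2^n * x := by
            apply mul_lt_mul_of_pos_left hx.1 (by positivity)
    · push_cast
      calc (2:ℝ)^n * x ≤ (2:ℝ)^n * (((j:ℝ)+1) * 2^(-(n:ℤ))) :=
            mul_le_mul_of_nonneg_left hx.2 (by positivity)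
        _ = (j:ℝ) + 1 := by rw [mul_comm ((j:ℝ)+1) _, ← mul_assoc, h2]; ring
  unfold eps
  rw [hceil]
  simp

lemma lint_translate (g : ℝ → ENNReal) (hg : Measurable g) (a b c : ℝ) :
    ∫⁻ x in Ioc a b, g (x + c) = ∫⁻ y in Ioc (a+c) (b+c), g y := by
  have h1 : (fun x : ℝ => x + c) ⁻¹' Ioc (a+c) (b+c) = Ioc a b := by
    ext x; simp only [Set.mem_preimage, Set.mem_Ioc]
    constructor <;> intro h <;> exact ⟨by linarith [h.1], by linarith [h.2]⟩
  calc ∫⁻ x in Ioc a b, g (x + c)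
      = ∫⁻ x in (fun x : ℝ => x + c) ⁻¹' Ioc (a+c) (b+c), g (x + c) := by rw [h1]
    _ = ∫⁻ y in Ioc (a+c) (b+c), g y ∂(Measure.map (fun x => x + c) volume) :=
        (setLIntegral_map measurableSet_Ioc hg (measurable_add_const c)).symm
    _ = ∫⁻ y in Ioc (a+c) (b+c), g y := by rw [map_add_right_eq_self]

lemma T_eq_of_mem (n j : ℕ) {x : ℝ}
    (hx : x ∈ Ioc ((j : ℝ) * 2 ^ (-(n:ℤ))) ((j + 1 : ℝ) * 2 ^ (-(n:ℤ)))) :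
    T n x = x + (if j % 2 = 0 then (2:ℝ)^(-(n:ℤ)) else -(2:ℝ)^(-(n:ℤ))) := by
  unfold T
  rw [eps_eq n j hx]
  rcases Nat.even_or_odd j with ⟨r, hr⟩ | ⟨r, hr⟩
  · subst hr
    have h1 : ((r + r : ℕ) : ℤ) % 2 = 0 := by push_cast; omega
    have h2 : (r + r) % 2 = 0 := by omega
    rw [h1, h2, if_pos rfl, zpow_zero, one_mul]
  · subst hr
    have h1 : ((2 * r + 1 : ℕ) : ℤ) % 2 = 1 := by push_cast; omega
    have h2 : (2 * r + 1) % 2 = 1 := by omega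
    rw [h1, h2, if_neg (by omega : ¬ (1 = 0)), zpow_one, neg_one_mul]

lemma key_mp (n : ℕ) (hn : 1 ≤ n) (g : ℝ → ENNReal) (hg : Measurable g) :
    ∫⁻ x in Ioc (0:ℝ) 1, g (T n x) = ∫⁻ x in Ioc (0:ℝ) 1, g x := by
  set c : ℝ := (2:ℝ)^(-(n:ℤ)) with hcdef
  have hcpos : 0 < c := by positivity
  have h2c : (2:ℝ)^(n:ℕ) * c = 1 := by
    rw [hcdef, ← zpow_natCast (2:ℝ) n, ← zpow_add₀ (by norm_num : (2:ℝ) ≠ 0)]; simp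
  have hcover : Ioc (0:ℝ) 1 = ⋃ j ∈ Finset.range (2^n), Ioc ((j:ℝ)*c) ((j+1:ℝ)*c) := by
    ext x
    simp only [Set.mem_Ioc, Set.mem_iUnion, Finset.mem_range]
    constructor
    · rintro ⟨hx0, hx1⟩
      set m : ℤ := ⌈(2:ℝ)^n * x⌉ with hm
      have hm1 : 1 ≤ m := Int.ceil_pos.2 (by positivity)
      have hm2 : m ≤ 2^n := by
        rw [hm]
        apply Int.ceil_le.2
        push_cast
        nlinarith [pow_pos (by norm_num : (0:ℝ) < 2) n]
      refine ⟨(m - 1).toNat, ?_, ?_, ?_⟩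
      · have h2n : (2:ℤ)^n = ((2^n : ℕ) : ℤ) := by push_cast; ring
        omega
      · have hlt : ((m:ℝ) - 1) < (2:ℝ)^n * x := by
          have := Int.ceil_lt_add_one ((2:ℝ)^n * x)
          rw [← hm] at this
          linarith
        have h3 : ((m - 1).toNat : ℝ) = (m : ℝ) - 1 := by
          have h := Int.toNat_of_nonneg (show (0:ℤ) ≤ m - 1 by omega)
          exact_mod_cast congrArg (Int.cast : ℤ → ℝ) h
        rw [h3]
        nlinarith [mul_lt_mul_of_pos_right hlt hcpos]
      · have h4 : (2:ℝ)^n * x ≤ (m:ℝ) := Int.le_ceil _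
        have h3 : ((m - 1).toNat : ℝ) = (m : ℝ) - 1 := by
          have h := Int.toNat_of_nonneg (show (0:ℤ) ≤ m - 1 by omega)
          exact_mod_cast congrArg (Int.cast : ℤ → ℝ) h
        rw [h3]
        nlinarith [mul_le_mul_of_nonneg_right h4 hcpos.le]
    · rintro ⟨j, hj, hx1, hx2⟩
      have hj' : ((j:ℝ) + 1) ≤ (2:ℝ)^n := by
        exact_mod_cast Nat.succ_le_of_lt hj
      constructor
      · nlinarith [hcpos, Nat.cast_nonneg (α := ℝ) j]
      · nlinarith [hcpos]
  have hdisj : (↑(Finset.range (2^n)) : Set ℕ).PairwiseDisjoint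
      (fun j : ℕ => Ioc ((j:ℝ)*c) ((j+1:ℝ)*c)) := by
    intro i _ j _ hij
    apply Set.Ioc_disjoint_Ioc.2
    rcases lt_or_gt_of_ne hij with h | h
    · calc min (((i:ℝ)+1)*c) (((j:ℝ)+1)*c) ≤ ((i:ℝ)+1)*c := min_le_left _ _
        _ ≤ (j:ℝ)*c := by
            have : ((i:ℝ)+1) ≤ (j:ℝ) := by exact_mod_cast h
            nlinarith
        _ ≤ max ((i:ℝ)*c) ((j:ℝ)*c) := le_max_right _ _
    · calc min (((i:ℝ)+1)*c) (((j:ℝ)+1)*c) ≤ ((j:ℝ)+1)*c := min_le_right _ _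
        _ ≤ (i:ℝ)*c := by
            have : ((j:ℝ)+1) ≤ (i:ℝ) := by exact_mod_cast h
            nlinarith
        _ ≤ max ((i:ℝ)*c) ((j:ℝ)*c) := le_max_left _ _
  rw [hcover, lintegral_biUnion_finset hdisj (fun b _ => measurableSet_Ioc) _,
      lintegral_biUnion_finset hdisj (fun b _ => measurableSet_Ioc) _]
  set σ : ℕ → ℕ := fun j => if j % 2 = 0 then j + 1 else j - 1 with hσ
  have hσ_even : ∀ a : ℕ, a % 2 = 0 → σ a = a + 1 := by
    intro a ha; simp only [hσ]; rw [if_pos ha]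
  have hσ_odd : ∀ a : ℕ, a % 2 = 1 → σ a = a - 1 := by
    intro a ha; simp only [hσ]; rw [if_neg (by omega)]
  have h2dvd : 2 ∣ 2^n := dvd_pow_self 2 (by omega)
  have hσ_mem : ∀ a ∈ Finset.range (2^n), σ a ∈ Finset.range (2^n) := by
    intro a ha
    simp only [Finset.mem_range] at ha ⊢
    rcases Nat.even_or_odd a with he | ho
    · rw [hσ_even a (Nat.even_iff.1 he)]
      have := Nat.even_iff.1 he; omega
    · rw [hσ_odd a (Nat.odd_iff.1 ho)]
      have := Nat.odd_iff.1 ho; omega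
  have hσσ : ∀ a : ℕ, σ (σ a) = a := by
    intro a
    rcases Nat.even_or_odd a with he | ho
    · have h0 := Nat.even_iff.1 he
      rw [hσ_even a h0, hσ_odd (a+1) (by omega)]
      omega
    · have h1 := Nat.odd_iff.1 ho
      rw [hσ_odd a h1, hσ_even (a-1) (by omega)]
      omega
  have hterm : ∀ j ∈ Finset.range (2^n),
      ∫⁻ x in Ioc ((j:ℝ)*c) ((j+1:ℝ)*c), g (T n x)
        = ∫⁻ x in Ioc ((σ j : ℝ)*c) ((σ j + 1:ℝ)*c), g x := by
    intro j hj
    have hstep : ∫⁻ x in Ioc ((j:ℝ)*c) ((j+1:ℝ)*c), g (T n x)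
        = ∫⁻ x in Ioc ((j:ℝ)*c) ((j+1:ℝ)*c),
            g (x + (if j % 2 = 0 then c else -c)) := by
      apply setLIntegral_congr_fun measurableSet_Ioc
      intro x hx
      beta_reduce
      rw [T_eq_of_mem n j hx]
    rw [hstep]
    rcases Nat.even_or_odd j with he | ho
    · have h0 := Nat.even_iff.1 he
      rw [if_pos h0, lint_translate _ hg, hσ_even j h0]
      congr 1 <;> push_cast <;> ring
    · have h1 := Nat.odd_iff.1 ho
      have hj1 : 1 ≤ j := by omega
      rw [if_neg (by omega), lint_translate _ hg, hσ_odd j h1]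
      congr 1 <;> rw [Nat.cast_sub hj1] <;> push_cast <;> ring
  rw [Finset.sum_congr rfl hterm]
  exact Finset.sum_nbij' (i := σ) (j := σ) hσ_mem hσ_mem
    (fun a _ => hσσ a) (fun a _ => hσσ a) (fun a _ => rfl)

/-- The summand `2^{−k}(cos θ + i(−1)^{ε_k(x)} sin θ) f(x + (−1)^{ε_k(x)} 2^{−k})` of the
series defining `C_θ[f](x) = (cos θ · C_x + sin θ · C_y)[f](x)`; here `k : ℕ` is
zero-indexed (so it stands for the `(k+1)`-st term). -/
def CthetaTerm (θ : ℝ) (f : ℝ → ℂ) (x : ℝ) (k : ℕ) : ℂ :=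
  (2 : ℂ) ^ (-((k : ℤ) + 1)) *
    ((Real.cos θ : ℂ) + Complex.I * (-1 : ℂ) ^ eps (k + 1) x * (Real.sin θ : ℂ)) *
    f (x + (-1 : ℝ) ^ eps (k + 1) x * (2 : ℝ) ^ (-((k : ℤ) + 1)))

lemma norm_CthetaTerm (θ : ℝ) (f : ℝ → ℂ) (x : ℝ) (k : ℕ) :
    ‖CthetaTerm θ f x k‖ = (2:ℝ)^(-((k:ℤ)+1)) * ‖f (T (k+1) x)‖ := by
  have hcoeff : ‖(Real.cos θ : ℂ) + Complex.I * (-1:ℂ)^(eps (k+1) x) * (Real.sin θ:ℂ)‖ = 1 := by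
    rcases Int.emod_two_eq (⌈(2:ℝ)^(k+1) * x⌉ - 1) with h | h
    · have h' : eps (k+1) x = 0 := h
      rw [h', zpow_zero]
      have heq : (Real.cos θ : ℂ) + Complex.I * 1 * (Real.sin θ:ℂ)
          = Complex.cos (θ:ℂ) + Complex.sin (θ:ℂ) * Complex.I := by
        rw [← Complex.ofReal_cos, ← Complex.ofReal_sin]; ring
      rw [heq]
      exact Complex.norm_cos_add_sin_mul_I θ
    · have h' : eps (k+1) x = 1 := h
      rw [h', zpow_one]
      have heq : (Real.cos θ : ℂ) + Complex.I * (-1) * (Real.sin θ:ℂ)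
          = Complex.cos ((-θ : ℝ):ℂ) + Complex.sin ((-θ : ℝ):ℂ) * Complex.I := by
        rw [← Complex.ofReal_cos, ← Complex.ofReal_sin, Real.cos_neg, Real.sin_neg]
        push_cast; ring
      rw [heq]
      exact Complex.norm_cos_add_sin_mul_I (-θ)
  have harg : x + (-1:ℝ)^(eps (k+1) x) * (2:ℝ)^(-((k:ℤ)+1)) = T (k+1) x := by
    unfold T; norm_cast
  unfold CthetaTerm
  rw [harg, norm_mul, norm_mul, hcoeff, mul_one, norm_zpow]
  norm_num

lemma CthetaTerm_measurable (θ : ℝ) (f : ℝ → ℂ) (hmeas : Measurable f) (k : ℕ) :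
    Measurable fun x => CthetaTerm θ f x k := by
  unfold CthetaTerm
  have h1 : Measurable fun x => ((-1:ℂ)^(eps (k+1) x)) :=
    (measurable_from_top (f := fun z : ℤ => (-1:ℂ)^z)).comp (eps_measurable _)
  have h2 : Measurable fun x => f (x + (-1:ℝ)^(eps (k+1) x) * (2:ℝ)^(-((k:ℤ)+1))) := by
    have h3 : Measurable fun x : ℝ => x + (-1:ℝ)^(eps (k+1) x) * (2:ℝ)^(-((k:ℤ)+1)) :=
      measurable_id.add
        (((measurable_from_top (f := fun z : ℤ => (-1:ℝ)^z)).comp (eps_measurable _)).mul_const _)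
    exact hmeas.comp h3
  exact (measurable_const.mul
    (measurable_const.add ((measurable_const.mul h1).mul measurable_const))).mul h2

/-- For measurable `f` with `∫_{(0,1]} |f|² < ∞`, the series defining `C_θ[f](x)`
converges absolutely for a.e. `x ∈ (0,1]` and `∫_{(0,1]} |C_θ[f]|² ≤ ∫_{(0,1]} |f|²`;
i.e. the operator `C_θ = cos θ · C_x + sin θ · C_y` has norm at most `1` on `L²(0,1]`. -/
theorem stmt14 (θ : ℝ) (f : ℝ → ℂ) (hmeas : Measurable f)
    (hf : IntegrableOn (fun x => ‖f x‖ ^ 2) (Set.Ioc (0 : ℝ) 1)) :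
    (∀ᵐ x ∂volume.restrict (Set.Ioc (0 : ℝ) 1),
        Summable fun k : ℕ => ‖CthetaTerm θ f x k‖) ∧
    (∫ x in Set.Ioc (0 : ℝ) 1, ‖∑' k : ℕ, CthetaTerm θ f x k‖ ^ 2) ≤
      ∫ x in Set.Ioc (0 : ℝ) 1, ‖f x‖ ^ 2 := by
  classical
  have h2pos : ∀ k : ℕ, (0:ℝ) < (2:ℝ)^(-((k:ℤ)+1)) := fun k => by positivity
  set μ := volume.restrict (Set.Ioc (0:ℝ) 1) with hμ
  -- rpow-squared measurability helper
  have hr2 : ∀ (g : ℝ → ℝ≥0∞), Measurable g → Measurable fun x => (g x)^(2:ℝ) := by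
    intro g hg
    have heq : (fun x => (g x)^(2:ℝ)) = fun x => (g x) * (g x) := funext fun x => by
      rw [show (2:ℝ) = ((2:ℕ):ℝ) by norm_num, ENNReal.rpow_natCast]; ring
    rw [heq]; exact hg.mul hg
  have hconv : ∀ y : ℂ, (‖y‖₊ : ℝ≥0∞)^(2:ℝ) = ENNReal.ofReal (‖y‖^2) := by
    intro y
    rw [ENNReal.ofReal_pow (norm_nonneg y), ofReal_norm, enorm_eq_nnnorm,
      show (2:ℝ) = ((2:ℕ):ℝ) by norm_num, ENNReal.rpow_natCast]
  set M : ℝ≥0∞ := ∫⁻ x, (‖f x‖₊ : ℝ≥0∞)^(2:ℝ) ∂μ with hMdef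
  have hmeasM : Measurable fun y : ℝ => (‖f y‖₊ : ℝ≥0∞)^(2:ℝ) :=
    hr2 _ (hmeas.nnnorm.coe_nnreal_ennreal)
  have hM_ne : M ≠ ⊤ := by
    have h2 := hf.2
    rw [hasFiniteIntegral_iff_norm] at h2
    have hre : ∀ y : ℂ, (‖y‖₊ : ℝ≥0∞)^(2:ℝ) = ENNReal.ofReal ‖‖y‖^2‖ := by
      intro y
      rw [hconv y, Real.norm_of_nonneg (by positivity)]
    rw [hMdef]
    simp_rw [hre]
    exact ne_of_lt h2
  -- the summand bounds
  set h : ℕ → ℝ → ℝ≥0∞ :=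
    fun k x => ENNReal.ofReal ((2:ℝ)^(-((k:ℤ)+1))) * (‖f (T (k+1) x)‖₊ : ℝ≥0∞) with hh
  have hhmeas : ∀ k, Measurable (h k) := fun k =>
    measurable_const.mul ((hmeas.comp (T_measurable (k+1))).nnnorm.coe_nnreal_ennreal)
  have henorm : ∀ x k, (‖CthetaTerm θ f x k‖₊ : ℝ≥0∞) = h k x := by
    intro x k
    rw [← enorm_eq_nnnorm, ← ofReal_norm, norm_CthetaTerm,
      ENNReal.ofReal_mul (h2pos k).le, ofReal_norm, enorm_eq_nnnorm]
  set c : ℕ → ℝ≥0∞ := fun k => ENNReal.ofReal ((2:ℝ)^(-((k:ℤ)+1))) with hc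
  have hint : ∀ k, ∫⁻ x, (h k x)^(2:ℝ) ∂μ = (c k)^(2:ℝ) * M := by
    intro k
    have heq : ∀ x, (h k x)^(2:ℝ) = (c k)^(2:ℝ) * ((‖f (T (k+1) x)‖₊ : ℝ≥0∞))^(2:ℝ) :=
      fun x => ENNReal.mul_rpow_of_nonneg _ _ (by norm_num)
    have hcomp : Measurable fun x => ((‖f (T (k+1) x)‖₊ : ℝ≥0∞))^(2:ℝ) :=
      hr2 (fun x => ((‖f (T (k+1) x)‖₊ : ℝ≥0∞)))
        ((hmeas.comp (T_measurable (k+1))).nnnorm.coe_nnreal_ennreal)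
    calc ∫⁻ x, (h k x)^(2:ℝ) ∂μ
        = ∫⁻ x, (c k)^(2:ℝ) * ((‖f (T (k+1) x)‖₊ : ℝ≥0∞))^(2:ℝ) ∂μ :=
          lintegral_congr fun x => heq x
      _ = (c k)^(2:ℝ) * ∫⁻ x, ((‖f (T (k+1) x)‖₊ : ℝ≥0∞))^(2:ℝ) ∂μ :=
          lintegral_const_mul _ hcomp
      _ = (c k)^(2:ℝ) * M := by
          congr 1
          exact key_mp (k+1) (by omega) (fun y => ((‖f y‖₊ : ℝ≥0∞))^(2:ℝ)) hmeasM
  have hcsum : ∀ m, ∑ k ∈ Finset.range m, c k ≤ 1 := by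
    intro m
    have hrr : ∀ k : ℕ, (2:ℝ)^(-((k:ℤ)+1)) = (1/2:ℝ)^(k+1) := by
      intro k
      rw [one_div, inv_pow, ← zpow_natCast (2:ℝ) (k+1), ← zpow_neg]
      norm_num
    calc ∑ k ∈ Finset.range m, c k
        = ENNReal.ofReal (∑ k ∈ Finset.range m, (2:ℝ)^(-((k:ℤ)+1))) :=
          (ENNReal.ofReal_sum_of_nonneg (fun k _ => (h2pos k).le)).symm
      _ ≤ ENNReal.ofReal 1 := by
          apply ENNReal.ofReal_le_ofReal
          rw [Finset.sum_congr rfl (fun k _ => hrr k)]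
          calc ∑ k ∈ Finset.range m, (1/2:ℝ)^(k+1)
              = (1/2) * ∑ k ∈ Finset.range m, (1/2:ℝ)^k := by
                rw [Finset.mul_sum]; exact Finset.sum_congr rfl fun k _ => by ring
            _ ≤ (1/2) * 2 := by
                have := sum_geometric_two_le m
                nlinarith [this]
            _ = 1 := by norm_num
      _ = 1 := ENNReal.ofReal_one
  have hSm : ∀ m, ∫⁻ x, (∑ k ∈ Finset.range m, h k x)^(2:ℝ) ∂μ ≤ M := by
    intro m
    have hmink : ∀ m, (∫⁻ x, (∑ k ∈ Finset.range m, h k x)^(2:ℝ) ∂μ)^(1/2:ℝ)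
        ≤ ∑ k ∈ Finset.range m, (c k) * M^(1/2:ℝ) := by
      intro m
      induction m with
      | zero => simp
      | succ m ih =>
        have hA : Measurable fun x => ∑ k ∈ Finset.range m, h k x :=
          Finset.measurable_sum _ fun k _ => hhmeas k
        have hstep := ENNReal.lintegral_Lp_add_le (μ := μ)
          (f := fun x => ∑ k ∈ Finset.range m, h k x) (g := h m)
          hA.aemeasurable (hhmeas m).aemeasurable one_le_two
        simp only [Pi.add_apply] at hstep
        simp only [Finset.sum_range_succ]
        have hgoal : (∫⁻ x, ((∑ k ∈ Finset.range m, h k x) + h m x)^(2:ℝ) ∂μ)^(1/2:ℝ)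
            ≤ (∫⁻ x, (∑ k ∈ Finset.range m, h k x)^(2:ℝ) ∂μ)^(1/2:ℝ)
              + (∫⁻ x, (h m x)^(2:ℝ) ∂μ)^(1/2:ℝ) := hstep
    -- combine
        refine le_trans hgoal (add_le_add ih ?_)
        rw [hint m, ENNReal.mul_rpow_of_nonneg _ _ (by norm_num : (0:ℝ) ≤ 1/2),
          ← ENNReal.rpow_mul]
        norm_num
    have h1 : (∫⁻ x, (∑ k ∈ Finset.range m, h k x)^(2:ℝ) ∂μ)^(1/2:ℝ) ≤ M^(1/2:ℝ) := by
      refine le_trans (hmink m) ?_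
      rw [← Finset.sum_mul]
      calc (∑ k ∈ Finset.range m, c k) * M^(1/2:ℝ)
          ≤ 1 * M^(1/2:ℝ) := mul_le_mul_left (hcsum m) _
        _ = M^(1/2:ℝ) := one_mul _
    have h2 := ENNReal.rpow_le_rpow h1 (by norm_num : (0:ℝ) ≤ 2)
    rw [← ENNReal.rpow_mul, ← ENNReal.rpow_mul] at h2
    have hhalf : (1/2 * 2 : ℝ) = 1 := by norm_num
    rw [hhalf, ENNReal.rpow_one, ENNReal.rpow_one] at h2
    exact h2
  set S : ℝ → ℝ≥0∞ := fun x => ∑' k, h k x with hS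
  have hSmeas : Measurable S := Measurable.ennreal_tsum hhmeas
  have hStail : ∫⁻ x, (S x)^(2:ℝ) ∂μ ≤ M := by
    have hpt : ∀ x, (S x)^(2:ℝ) = ⨆ m, (∑ k ∈ Finset.range m, h k x)^(2:ℝ) := by
      intro x
      rw [hS]
      simp only
      rw [ENNReal.tsum_eq_iSup_nat]
      calc (⨆ m, ∑ k ∈ Finset.range m, h k x)^(2:ℝ)
          = ENNReal.orderIsoRpow 2 (by norm_num) (⨆ m, ∑ k ∈ Finset.range m, h k x) := by
            rw [ENNReal.orderIsoRpow_apply]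
        _ = ⨆ m, ENNReal.orderIsoRpow 2 (by norm_num) (∑ k ∈ Finset.range m, h k x) :=
            OrderIso.map_iSup _ _
        _ = ⨆ m, (∑ k ∈ Finset.range m, h k x)^(2:ℝ) := by
            simp_rw [ENNReal.orderIsoRpow_apply]
    simp_rw [hpt]
    rw [lintegral_iSup
      (fun m => hr2 _ (Finset.measurable_sum _ fun k _ => hhmeas k))
      (fun m₁ m₂ hm => fun x => ENNReal.rpow_le_rpow
        (Finset.sum_le_sum_of_subset (Finset.range_subset_range.2 hm)) (by norm_num))]
    exact iSup_le hSm
  have hae_lt : ∀ᵐ x ∂μ, S x < ⊤ := by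
    have h1 : ∫⁻ x, (S x)^(2:ℝ) ∂μ ≠ ⊤ := ne_of_lt (lt_of_le_of_lt hStail hM_ne.lt_top)
    filter_upwards [ae_lt_top (hr2 S hSmeas) h1] with x hx
    by_contra hcon
    rw [not_lt, top_le_iff] at hcon
    rw [hcon, ENNReal.top_rpow_of_pos (by norm_num)] at hx
    exact absurd hx (lt_irrefl _)
  have hsummable : ∀ᵐ x ∂μ, Summable fun k => ‖CthetaTerm θ f x k‖ := by
    filter_upwards [hae_lt] with x hx
    have hne : ∑' k, (‖CthetaTerm θ f x k‖₊ : ℝ≥0∞) ≠ ⊤ := by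
      rw [tsum_congr (henorm x)]
      exact ne_of_lt hx
    have := ENNReal.summable_toReal hne
    simpa using this
  refine ⟨hsummable, ?_⟩
  have hterm_meas : ∀ k, Measurable fun x => CthetaTerm θ f x k :=
    CthetaTerm_measurable θ f hmeas
  set g : ℝ → ℂ := fun x => ∑' k, CthetaTerm θ f x k with hg
  have hg_aesm : AEStronglyMeasurable g μ := by
    apply aestronglyMeasurable_of_tendsto_ae (u := Filter.atTop)
      (f := fun m x => ∑ k ∈ Finset.range m, CthetaTerm θ f x k)
    · intro m
      exact (Finset.measurable_sum _ fun k _ => hterm_meas k).aestronglyMeasurable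
    · filter_upwards [hsummable] with x hx
      exact (Summable.of_norm hx).hasSum.tendsto_sum_nat
  have hgnorm_ae : ∀ᵐ x ∂μ, (‖g x‖₊ : ℝ≥0∞) ≤ S x := by
    filter_upwards [hsummable] with x hx
    calc (‖g x‖₊ : ℝ≥0∞) = ENNReal.ofReal ‖g x‖ := (ofReal_norm _).symm
      _ ≤ ENNReal.ofReal (∑' k, ‖CthetaTerm θ f x k‖) :=
          ENNReal.ofReal_le_ofReal (norm_tsum_le_tsum_norm hx)
      _ = ∑' k, ENNReal.ofReal ‖CthetaTerm θ f x k‖ :=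
          ENNReal.ofReal_tsum_of_nonneg (fun k => norm_nonneg _) hx
      _ = S x := tsum_congr fun k => by
          rw [ofReal_norm, enorm_eq_nnnorm]; exact henorm x k
  have hlhs : ∫⁻ x, (‖g x‖₊ : ℝ≥0∞)^(2:ℝ) ∂μ ≤ M := by
    refine le_trans (lintegral_mono_ae ?_) hStail
    filter_upwards [hgnorm_ae] with x hx
    exact ENNReal.rpow_le_rpow hx (by norm_num)
  have hgnn : 0 ≤ᵐ[μ] fun x => ‖g x‖^2 := ae_of_all _ fun x => by positivity
  have e1 : (∫ x in Set.Ioc (0:ℝ) 1, ‖g x‖^2)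
      = (∫⁻ x, ENNReal.ofReal (‖g x‖^2) ∂μ).toReal :=
    integral_eq_lintegral_of_nonneg_ae hgnn
      ((continuous_pow 2).comp_aestronglyMeasurable hg_aesm.norm)
  have e2 : (∫ x in Set.Ioc (0:ℝ) 1, ‖f x‖^2) = M.toReal := by
    rw [integral_eq_lintegral_of_nonneg_ae (ae_of_all _ fun x => by positivity)
      ((continuous_pow 2).comp_aestronglyMeasurable hmeas.norm.aestronglyMeasurable)]
    rw [hMdef]
    congr 1
    exact lintegral_congr fun x => ((hconv (f x)).symm)
  show (∫ x in Set.Ioc (0:ℝ) 1, ‖g x‖^2) ≤ ∫ x in Set.Ioc (0:ℝ) 1, ‖f x‖^2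
  rw [e1, e2]
  apply ENNReal.toReal_mono hM_ne
  refine le_trans (le_of_eq (lintegral_congr fun x => ((hconv (g x))).symm)) hlhs
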